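/- arXiv:1601.03092 — 5 statements merged into one kernel-verified Lean document; each statement's English description precedes it below -/
import Mathlib

section
/- Let λ be an irrational real number, let ℓ₀ be a positive integer, and let k, c ∈ ℤ be such that |k·λ − c| < ‖ℓ·λ‖ for every integer ℓ with 1 ≤ ℓ ≤ ℓ₀. Then for every integer ℓ with 1 ≤ ℓ ≤ ℓ₀ one has ⌊(k+ℓ)·λ⌋ = c + ⌊ℓ·λ⌋ and ⌊(k−ℓ)·λ⌋ = c − ⌊ℓ·λ⌋ − 1. -/
/-- The distance from a real number to the nearest integer. -/
noncomputable def nearestIntDist (x : ℝ) : ℝ := |x - round x|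

/-- Floor-function recurrence identity for an irrational rotation number: if `|k·λ − c|` is
smaller than `‖ℓ·λ‖` for all integers `1 ≤ ℓ ≤ ℓ₀`, then for all such `ℓ` one has
`⌊(k+ℓ)λ⌋ = c + ⌊ℓλ⌋` and `⌊(k−ℓ)λ⌋ = c − ⌊ℓλ⌋ − 1`. -/
theorem floor_recurrence (lam : ℝ) (hlam : Irrational lam) (l₀ : ℕ) (hl₀ : 0 < l₀)
    (k c : ℤ)
    (h : ∀ ℓ : ℤ, 1 ≤ ℓ → ℓ ≤ (l₀ : ℤ) → |(k : ℝ) * lam - (c : ℝ)| <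
      nearestIntDist ((ℓ : ℝ) * lam)) :
    ∀ ℓ : ℤ, 1 ≤ ℓ → ℓ ≤ (l₀ : ℤ) →
      ⌊((k + ℓ : ℤ) : ℝ) * lam⌋ = c + ⌊(ℓ : ℝ) * lam⌋ ∧
      ⌊((k - ℓ : ℤ) : ℝ) * lam⌋ = c - ⌊(ℓ : ℝ) * lam⌋ - 1 := by
  intro ℓ h1 h2
  have hh := h ℓ h1 h2
  rw [nearestIntDist, abs_sub_round_eq_min] at hh
  set f := Int.fract ((ℓ : ℝ) * lam) with hf
  have hfl : f < 1 := Int.fract_lt_one _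
  have hεf : |(k : ℝ) * lam - c| < f := lt_of_lt_of_le hh (min_le_left _ _)
  have hεf' : |(k : ℝ) * lam - c| < 1 - f := lt_of_lt_of_le hh (min_le_right _ _)
  rw [abs_lt] at hεf hεf'
  have hfrac : ((ℓ : ℝ) * lam) = (⌊(ℓ : ℝ) * lam⌋ : ℝ) + f := by
    rw [hf, Int.fract]; ring
  constructor
  · rw [Int.floor_eq_iff]
    push_cast
    constructor <;> nlinarith [hεf.1, hεf.2, hεf'.1, hεf'.2]
  · rw [Int.floor_eq_iff]
    push_cast
    constructor <;> nlinarith [hεf.1, hεf.2, hεf'.1, hεf'.2]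
end

section
/- Let r ≥ 1 and m ≥ 0 be integers, let λ_{i,q} ∈ ℝ for 1 ≤ i ≤ r and 1 ≤ q ≤ m, let Δ₁, …, Δ_r ∈ ℝ, and let ε > 0. Then the set of integer vectors (k₁, …, k_r) ∈ ℤ^r satisfying ‖k_i·λ_{i,q}‖ < ε for all i and q, together with |k₁·Δ₁ − k_i·Δ_i| < 1/8 for all i = 2, …, r, is infinite. -/
lemma nid_le_abs (x : ℝ) : nearestIntDist x ≤ |x| := by
  have := round_le x 0
  simpa [nearestIntDist] using this

lemma nid_add_int (x : ℝ) (K : ℤ) : nearestIntDist (x + K) = nearestIntDist x := by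
  simp [nearestIntDist, round_add_intCast]

/-- box map -/
noncomputable def fbox (M : ℕ) (hM : 0 < M) (x : ℝ) : Fin M :=
  ⟨(⌊(M:ℝ) * Int.fract x⌋).toNat, by
    have h1 : (0:ℤ) ≤ ⌊(M:ℝ) * Int.fract x⌋ :=
      Int.floor_nonneg.mpr (mul_nonneg (by positivity) (Int.fract_nonneg x))
    have h2 : ⌊(M:ℝ) * Int.fract x⌋ < (M:ℤ) := by
      apply Int.floor_lt.mpr
      push_cast
      calc (M:ℝ) * Int.fract x < (M:ℝ) * 1 := by
            apply mul_lt_mul_of_pos_left (Int.fract_lt_one x)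
            exact_mod_cast hM
        _ = M := by ring
    omega⟩

lemma fbox_eq_fract_close {M : ℕ} (hM : 0 < M) {x y : ℝ}
    (h : fbox M hM x = fbox M hM y) : |Int.fract x - Int.fract y| < 1 / M := by
  have h1 : (0:ℤ) ≤ ⌊(M:ℝ) * Int.fract x⌋ :=
    Int.floor_nonneg.mpr (mul_nonneg (by positivity) (Int.fract_nonneg x))
  have h2 : (0:ℤ) ≤ ⌊(M:ℝ) * Int.fract y⌋ :=
    Int.floor_nonneg.mpr (mul_nonneg (by positivity) (Int.fract_nonneg y))
  have hfl : ⌊(M:ℝ) * Int.fract x⌋ = ⌊(M:ℝ) * Int.fract y⌋ := by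
    have := congrArg Fin.val h
    simp only [fbox] at this
    omega
  have hMpos : (0:ℝ) < M := by exact_mod_cast hM
  have hx1 : ((⌊(M:ℝ) * Int.fract x⌋ : ℤ) : ℝ) ≤ (M:ℝ) * Int.fract x := Int.floor_le _
  have hx2 : (M:ℝ) * Int.fract x < (⌊(M:ℝ) * Int.fract x⌋ : ℤ) + 1 := Int.lt_floor_add_one _
  have hy1 : ((⌊(M:ℝ) * Int.fract y⌋ : ℤ) : ℝ) ≤ (M:ℝ) * Int.fract y := Int.floor_le _
  have hy2 : (M:ℝ) * Int.fract y < (⌊(M:ℝ) * Int.fract y⌋ : ℤ) + 1 := Int.lt_floor_add_one _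
  rw [hfl] at hx1 hx2
  have habs : |(M:ℝ) * Int.fract x - (M:ℝ) * Int.fract y| < 1 := by
    rw [abs_lt]; constructor <;> linarith
  have h3 : |Int.fract x - Int.fract y|
      = |(M:ℝ) * Int.fract x - (M:ℝ) * Int.fract y| / M := by
    rw [show (M:ℝ) * Int.fract x - (M:ℝ) * Int.fract y
        = (M:ℝ) * (Int.fract x - Int.fract y) by ring, abs_mul, abs_of_pos hMpos]
    field_simp
  rw [h3]
  gcongr

lemma minkowski_aux (r m : ℕ) (hr : 0 < r)
    (lam : Fin r → Fin m → ℝ) (Δ : Fin r → ℝ) (ε : ℝ) (hε : 0 < ε)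
    (θ : Fin r → ℝ) (j0 : Fin r) (hj0 : θ j0 = 1)
    (hθ : ∀ i, Δ i * θ i = Δ ⟨0, hr⟩ * θ ⟨0, hr⟩) :
    {k : Fin r → ℤ |
      (∀ i : Fin r, ∀ q : Fin m, nearestIntDist ((k i : ℝ) * lam i q) < ε) ∧
      (∀ i : Fin r, |(k ⟨0, hr⟩ : ℝ) * Δ ⟨0, hr⟩ - (k i : ℝ) * Δ i| < 1 / 8)}.Infinite := by
  set z : Fin r := ⟨0, hr⟩ with hz
  -- choose M
  obtain ⟨M, hMC⟩ := exists_nat_gt (1/ε + ∑ i : Fin r, 8 * (|Δ z| + |Δ i|))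
  have hsum0 : (0:ℝ) ≤ ∑ i : Fin r, 8 * (|Δ z| + |Δ i|) :=
    Finset.sum_nonneg (fun i _ => by positivity)
  have hMε : 1/ε < (M:ℝ) := by linarith
  have hM0 : (0:ℝ) < (M:ℝ) := lt_trans (by positivity) hMε
  have hM : 0 < M := by exact_mod_cast hM0
  have hMΔ : ∀ i : Fin r, 8 * (|Δ z| + |Δ i|) < (M:ℝ) := by
    intro i
    have hle : 8 * (|Δ z| + |Δ i|) ≤ ∑ j : Fin r, 8 * (|Δ z| + |Δ j|) :=
      Finset.single_le_sum (f := fun j => 8 * (|Δ z| + |Δ j|))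
        (fun j _ => by positivity) (Finset.mem_univ i)
    have : 0 < 1/ε := by positivity
    linarith
  have h1Mε : 1/(M:ℝ) < ε := by
    rw [div_lt_iff₀ hM0]
    rw [div_lt_iff₀ hε] at hMε
    linarith
  -- pigeonhole map
  set Φ : ℕ → ((Fin r → Fin m → Fin M) × (Fin r → Fin M)) :=
    fun n => (fun i q => fbox M hM ((⌊(n:ℝ) * θ i⌋ : ℤ) * lam i q),
              fun i => fbox M hM ((n:ℝ) * θ i)) with hΦ
  obtain ⟨y, hy⟩ := Finite.exists_infinite_fiber Φ
  have hyS : (Φ ⁻¹' {y}).Infinite := Set.infinite_coe_iff.mp hy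
  have hSne : (Φ ⁻¹' {y}).Nonempty := hyS.nonempty
  obtain ⟨n0, hn0⟩ := hSne
  set g : ℕ → (Fin r → ℤ) := fun n i => ⌊(n:ℝ) * θ i⌋ - ⌊(n0:ℝ) * θ i⌋ with hg
  have hginj : Function.Injective g := by
    intro a b hab
    have := congrFun hab j0
    simp only [hg, hj0, mul_one] at this
    have ha : ⌊(a:ℝ)⌋ = (a:ℤ) := Int.floor_natCast a
    have hb : ⌊(b:ℝ)⌋ = (b:ℤ) := Int.floor_natCast b
    rw [ha, hb] at this
    omega
  have himg : (g '' (Φ ⁻¹' {y})).Infinite :=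
    Set.Infinite.image hginj.injOn hyS
  apply Set.Infinite.mono _ himg
  · -- membership
    rintro k ⟨n, hn, rfl⟩
    have hΦeq : Φ n = Φ n0 := by
      have h1 : Φ n = y := hn
      have h2 : Φ n0 = y := hn0
      rw [h1, h2]
    have hbox1 : ∀ i q, fbox M hM ((⌊(n:ℝ) * θ i⌋ : ℤ) * lam i q)
        = fbox M hM ((⌊(n0:ℝ) * θ i⌋ : ℤ) * lam i q) := by
      intro i q
      have := congrFun (congrFun (congrArg Prod.fst hΦeq) i) q
      simpa [hΦ] using this
    have hbox2 : ∀ i, fbox M hM ((n:ℝ) * θ i) = fbox M hM ((n0:ℝ) * θ i) := by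
      intro i
      have := congrFun (congrArg Prod.snd hΦeq) i
      simpa [hΦ] using this
    constructor
    · intro i q
      set A : ℤ := ⌊(n:ℝ) * θ i⌋
      set B : ℤ := ⌊(n0:ℝ) * θ i⌋
      have hfr : |Int.fract ((A:ℝ) * lam i q) - Int.fract ((B:ℝ) * lam i q)| < 1/M :=
        fbox_eq_fract_close hM (hbox1 i q)
      have hrepr : ((g n i : ℤ) : ℝ) * lam i q
          = (Int.fract ((A:ℝ) * lam i q) - Int.fract ((B:ℝ) * lam i q))
            + ((⌊(A:ℝ) * lam i q⌋ - ⌊(B:ℝ) * lam i q⌋ : ℤ) : ℝ) := by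
        have e1 : Int.fract ((A:ℝ) * lam i q) + ⌊(A:ℝ) * lam i q⌋ = (A:ℝ) * lam i q :=
          Int.fract_add_floor _
        have e2 : Int.fract ((B:ℝ) * lam i q) + ⌊(B:ℝ) * lam i q⌋ = (B:ℝ) * lam i q :=
          Int.fract_add_floor _
        simp only [hg]
        push_cast
        push_cast at e1 e2
        linarith
      rw [hrepr, nid_add_int]
      calc nearestIntDist _ ≤ _ := nid_le_abs _
        _ < 1/M := hfr
        _ < ε := h1Mε
    · intro i
      have hfrz : |Int.fract ((n:ℝ) * θ z) - Int.fract ((n0:ℝ) * θ z)| < 1/M :=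
        fbox_eq_fract_close hM (hbox2 z)
      have hfri : |Int.fract ((n:ℝ) * θ i) - Int.fract ((n0:ℝ) * θ i)| < 1/M :=
        fbox_eq_fract_close hM (hbox2 i)
      -- rewrite k j * Δ j
      have key : ∀ j : Fin r, ((g n j : ℤ) : ℝ) * Δ j
          = ((n:ℝ) - (n0:ℝ)) * (θ j * Δ j)
            - (Int.fract ((n:ℝ) * θ j) - Int.fract ((n0:ℝ) * θ j)) * Δ j := by
        intro j
        have e1 : ((⌊(n:ℝ) * θ j⌋ : ℤ) : ℝ) = (n:ℝ) * θ j - Int.fract ((n:ℝ) * θ j) := by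
          rw [Int.self_sub_fract]
        have e2 : ((⌊(n0:ℝ) * θ j⌋ : ℤ) : ℝ) = (n0:ℝ) * θ j - Int.fract ((n0:ℝ) * θ j) := by
          rw [Int.self_sub_fract]
        simp only [hg]
        push_cast
        rw [e1, e2]
        ring
      have hθi : θ i * Δ i = θ z * Δ z := by linear_combination hθ i
      rw [key z, key i, hθi]
      have hb1 : |(Int.fract ((n:ℝ) * θ z) - Int.fract ((n0:ℝ) * θ z)) * Δ z| ≤ |Δ z| / M := by
        rw [abs_mul]
        rw [div_eq_mul_inv, mul_comm (|Δ z|)]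
        apply mul_le_mul_of_nonneg_right _ (abs_nonneg _)
        rw [← one_div]
        exact le_of_lt hfrz
      have hb2 : |(Int.fract ((n:ℝ) * θ i) - Int.fract ((n0:ℝ) * θ i)) * Δ i| ≤ |Δ i| / M := by
        rw [abs_mul]
        rw [div_eq_mul_inv, mul_comm (|Δ i|)]
        apply mul_le_mul_of_nonneg_right _ (abs_nonneg _)
        rw [← one_div]
        exact le_of_lt hfri
      have hMi := hMΔ i
      have hfinal : |Δ z| / M + |Δ i| / M < 1/8 := by
        rw [← add_div, div_lt_iff₀ hM0]
        linarith
      calc |((n:ℝ) - (n0:ℝ)) * (θ z * Δ z)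
              - (Int.fract ((n:ℝ) * θ z) - Int.fract ((n0:ℝ) * θ z)) * Δ z
            - (((n:ℝ) - (n0:ℝ)) * (θ z * Δ z)
              - (Int.fract ((n:ℝ) * θ i) - Int.fract ((n0:ℝ) * θ i)) * Δ i)|
          = |(Int.fract ((n:ℝ) * θ i) - Int.fract ((n0:ℝ) * θ i)) * Δ i
            - (Int.fract ((n:ℝ) * θ z) - Int.fract ((n0:ℝ) * θ z)) * Δ z| := by
              congr 1; ring
        _ ≤ |(Int.fract ((n:ℝ) * θ i) - Int.fract ((n0:ℝ) * θ i)) * Δ i|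
            + |(Int.fract ((n:ℝ) * θ z) - Int.fract ((n0:ℝ) * θ z)) * Δ z| := abs_sub _ _
        _ ≤ |Δ i| / M + |Δ z| / M := add_le_add hb2 hb1
        _ < 1/8 := by linarith [hfinal]

/-- There are infinitely many integer vectors `(k 1, …, k r)` satisfying the system of
Diophantine inequalities `‖k i · λ i q‖ < ε` for all `i, q` and
`|k 1 · Δ 1 − k i · Δ i| < 1/8` for all `i`. -/
theorem minkowski_system_infinite (r m : ℕ) (hr : 0 < r)
    (lam : Fin r → Fin m → ℝ) (Δ : Fin r → ℝ) (ε : ℝ) (hε : 0 < ε) :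
    {k : Fin r → ℤ |
      (∀ i : Fin r, ∀ q : Fin m, nearestIntDist ((k i : ℝ) * lam i q) < ε) ∧
      (∀ i : Fin r, |(k ⟨0, hr⟩ : ℝ) * Δ ⟨0, hr⟩ - (k i : ℝ) * Δ i| < 1 / 8)}.Infinite := by
  by_cases h : ∀ i : Fin r, i ≠ ⟨0, hr⟩ → Δ i ≠ 0
  · apply minkowski_aux r m hr lam Δ ε hε
      (fun i => if i = ⟨0, hr⟩ then 1 else Δ ⟨0, hr⟩ / Δ i) ⟨0, hr⟩ (by simp)
    intro i
    by_cases hi : i = ⟨0, hr⟩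
    · subst hi; rfl
    · rw [if_neg hi, if_pos rfl, mul_one, mul_comm, div_mul_cancel₀ _ (h i hi)]
  · push_neg at h
    obtain ⟨i0, hi0ne, hi0⟩ := h
    apply minkowski_aux r m hr lam Δ ε hε
      (fun i => if i = i0 then 1 else 0) i0 (by simp)
    intro i
    by_cases hi : i = i0
    · subst hi; simp [hi0, if_neg (Ne.symm hi0ne)]
    · simp [if_neg hi, if_neg (Ne.symm hi0ne)]
end

section
/- Let r ≥ 1 and m ≥ 0 be integers, let λ_{i,q} ∈ ℝ for 1 ≤ i ≤ r and 1 ≤ q ≤ m, let Δ₁, …, Δ_r be strictly positive real numbers, let ε > 0, let N be a positive integer, and let K ∈ ℕ. Then there exist positive integers k₁, …, k_r, each divisible by N and each ≥ K, and an integer d, such that for all i and q one has ‖k_i·λ_{i,q}‖ < ε and |k_i·Δ_i − d| < ε. -/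
lemma nid_le (x : ℝ) (c : ℤ) : nearestIntDist x ≤ |x - c| := by
  unfold nearestIntDist
  rcases eq_or_ne c (round x) with h | h
  · rw [h]
  · have h1 : (1:ℝ) ≤ |(c:ℝ) - round x| := by
      have hne : c - round x ≠ 0 := sub_ne_zero.mpr h
      have := Int.one_le_abs hne
      calc (1:ℝ) = ((1:ℤ):ℝ) := by norm_num
        _ ≤ ((|c - round x| : ℤ) : ℝ) := by exact_mod_cast this
        _ = |(c:ℝ) - round x| := by push_cast; ring_nf
    have h2 : |x - round x| ≤ 1/2 := abs_sub_round x
    have t : |(c:ℝ) - round x| ≤ |(c:ℝ) - x| + |x - round x| := abs_sub_le _ _ _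
    rw [abs_sub_comm (c:ℝ) x] at t
    linarith

lemma simul_approx {ι : Type*} [Fintype ι] [DecidableEq ι] (α : ι → ℝ) {δ : ℝ}
    (hδ : 0 < δ) : ∃ n : ℕ, 0 < n ∧ ∀ j, nearestIntDist (n * α j) < δ := by
  obtain ⟨M, hM⟩ := exists_nat_one_div_lt hδ
  set M' := M + 1 with hM'def
  have hM'pos : (0:ℝ) < M' := by positivity
  have main : ∀ d1 d2 : ℕ, d1 < d2 →
      (∀ j, ⌊Int.fract (d1 * α j) * M'⌋₊ = ⌊Int.fract (d2 * α j) * M'⌋₊) →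
      ∀ j, nearestIntDist ((d2 - d1 : ℕ) * α j) < δ := by
    intro d1 d2 hlt hfe j
    set x := (d1:ℝ) * α j with hx
    set y := (d2:ℝ) * α j with hy
    have hfx := hfe j
    have h1 : Int.fract x * M' < (⌊Int.fract x * M'⌋₊ : ℝ) + 1 := Nat.lt_floor_add_one _
    have h2 : (⌊Int.fract x * M'⌋₊ : ℝ) ≤ Int.fract x * M' :=
      Nat.floor_le (mul_nonneg (Int.fract_nonneg _) hM'pos.le)
    have h3 : Int.fract y * M' < (⌊Int.fract x * M'⌋₊ : ℝ) + 1 := by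
      rw [hfx]; exact Nat.lt_floor_add_one _
    have h4 : (⌊Int.fract x * M'⌋₊ : ℝ) ≤ Int.fract y * M' := by
      rw [hfx]; exact Nat.floor_le (mul_nonneg (Int.fract_nonneg _) hM'pos.le)
    have habs : |(Int.fract y - Int.fract x) * M'| < 1 := by
      rw [sub_mul]
      exact abs_lt.mpr ⟨by linarith, by linarith⟩
    have hdiff : |Int.fract y - Int.fract x| < 1 / M' := by
      rw [lt_div_iff₀ hM'pos]
      rwa [abs_mul, abs_of_pos hM'pos] at habs
    have hcast : ((d2 - d1 : ℕ) : ℝ) = (d2:ℝ) - d1 := by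
      push_cast [Nat.cast_sub hlt.le]; ring
    have hle : nearestIntDist (((d2 - d1 : ℕ) : ℝ) * α j) ≤ |Int.fract y - Int.fract x| := by
      refine (nid_le _ (⌊y⌋ - ⌊x⌋)).trans_eq ?_
      congr 1
      rw [hcast, Int.fract, Int.fract, hx, hy]
      push_cast
      ring
    have hfin : (1:ℝ) / M' < δ := by
      have : ((M':ℕ):ℝ) = (M:ℝ) + 1 := by push_cast [hM'def]; ring
      rw [this]; exact hM
    exact lt_of_le_of_lt hle (lt_trans hdiff hfin)
  have hcardlt : (Fintype.piFinset fun _ : ι => Finset.range M').card <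
      (Finset.range (M' ^ Fintype.card ι + 1)).card := by
    rw [Finset.card_range, Fintype.card_piFinset]
    simp [Finset.prod_const]
  obtain ⟨d1, -, d2, -, hne, heq⟩ :=
    Finset.exists_ne_map_eq_of_card_lt_of_maps_to (t := Fintype.piFinset fun _ : ι => Finset.range M')
      hcardlt (f := fun d : ℕ => fun j : ι => ⌊Int.fract (d * α j) * M'⌋₊)
      (fun d _ => Fintype.mem_piFinset.mpr fun j => Finset.mem_range.mpr (by
        refine Nat.floor_lt (mul_nonneg (Int.fract_nonneg _) hM'pos.le) |>.mpr ?_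
        have := Int.fract_lt_one ((d:ℝ) * α j)
        nlinarith [Int.fract_nonneg ((d:ℝ) * α j)]))
  rcases hne.lt_or_gt with h | h
  · exact ⟨d2 - d1, Nat.sub_pos_of_lt h, main d1 d2 h (fun j => congrFun heq j)⟩
  · exact ⟨d1 - d2, Nat.sub_pos_of_lt h, main d2 d1 h (fun j => (congrFun heq j).symm)⟩

lemma nid_nsmul (n : ℕ) (x : ℝ) : nearestIntDist (n * x) ≤ n * nearestIntDist x := by
  refine (nid_le (n * x) (n * round x)).trans_eq ?_
  unfold nearestIntDist
  push_cast
  rw [← mul_sub, abs_mul, abs_of_nonneg (by positivity : (0:ℝ) ≤ (n:ℝ))]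

lemma simul_approx_large {ι : Type*} [Fintype ι] [DecidableEq ι] (α : ι → ℝ) {δ : ℝ}
    (hδ : 0 < δ) (K' : ℕ) : ∃ n : ℕ, K' < n ∧ ∀ j, nearestIntDist (n * α j) < δ := by
  obtain ⟨n0, hn0, h⟩ := simul_approx α (δ := δ / (K' + 1)) (by positivity)
  refine ⟨(K' + 1) * n0, ?_, ?_⟩
  · calc K' < K' + 1 := Nat.lt_succ_self _
      _ = (K' + 1) * 1 := (mul_one _).symm
      _ ≤ (K' + 1) * n0 := Nat.mul_le_mul_left _ hn0
  · intro j
    have h1 : (((K' + 1) * n0 : ℕ) : ℝ) * α j = ((K' + 1 : ℕ) : ℝ) * ((n0 : ℝ) * α j) := by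
      push_cast; ring
    rw [h1]
    refine lt_of_le_of_lt (nid_nsmul (K' + 1) _) ?_
    have h2 := h j
    have h3 : ((K' + 1 : ℕ) : ℝ) > 0 := by positivity
    calc ((K' + 1 : ℕ):ℝ) * nearestIntDist ((n0:ℝ) * α j)
        < ((K' + 1 : ℕ):ℝ) * (δ / (K' + 1)) := by
          exact mul_lt_mul_of_pos_left h2 h3
      _ = δ := by push_cast; field_simp
      _ ≤ δ := le_refl _

/-- The Diophantine core of the index recurrence theorem: if all mean indices `Δ i` are
positive, then for any `ε > 0`, any positive integer `N` and any `K`, there are positive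
integers `k 1, …, k r`, all divisible by `N` and at least `K`, and a single integer `d`,
such that each `k i · λ i q` is within `ε` of an integer and each `k i · Δ i` is within
`ε` of `d`. -/
theorem index_recurrence_diophantine (r m : ℕ) (hr : 0 < r)
    (lam : Fin r → Fin m → ℝ) (Δ : Fin r → ℝ) (hΔ : ∀ i, 0 < Δ i)
    (ε : ℝ) (hε : 0 < ε) (N : ℕ) (hN : 0 < N) (K : ℕ) :
    ∃ (k : Fin r → ℕ) (d : ℤ),
      (∀ i : Fin r, 0 < k i ∧ N ∣ k i ∧ K ≤ k i) ∧
      (∀ i : Fin r, (∀ q : Fin m, nearestIntDist ((k i : ℝ) * lam i q) < ε) ∧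
        |(k i : ℝ) * Δ i - (d : ℝ)| < ε) := by
  classical
  set B : ℝ := 1 + (∑ i, Δ i) + (∑ i, ∑ q, |lam i q|) with hBdef
  have hsum1 : (0:ℝ) ≤ ∑ i, Δ i := Finset.sum_nonneg fun i _ => (hΔ i).le
  have hsum2 : (0:ℝ) ≤ ∑ i, ∑ q, |lam i q| :=
    Finset.sum_nonneg fun i _ => Finset.sum_nonneg fun q _ => abs_nonneg _
  have hB1 : 1 ≤ B := by rw [hBdef]; linarith
  have hBpos : 0 < B := lt_of_lt_of_le one_pos hB1
  have hΔB : ∀ i, Δ i ≤ B := by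
    intro i
    have h := Finset.single_le_sum (f := Δ) (fun i _ => (hΔ i).le) (Finset.mem_univ i)
    rw [hBdef]; linarith
  have hlamB : ∀ i q, |lam i q| ≤ B := by
    intro i q
    have h1 : |lam i q| ≤ ∑ q, |lam i q| :=
      Finset.single_le_sum (f := fun q => |lam i q|) (fun q _ => abs_nonneg _)
        (Finset.mem_univ q)
    have h2 : (∑ q, |lam i q|) ≤ ∑ i, ∑ q, |lam i q| :=
      Finset.single_le_sum (f := fun i => ∑ q, |lam i q|)
        (fun i _ => Finset.sum_nonneg fun q _ => abs_nonneg _) (Finset.mem_univ i)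
    rw [hBdef]; linarith
  have hNpos : (0:ℝ) < N := by exact_mod_cast hN
  have hN1 : (1:ℝ) ≤ N := by exact_mod_cast hN
  set δ : ℝ := min 1 (ε / (3 * N * B)) with hδdef
  have hδpos : 0 < δ := lt_min one_pos (by positivity)
  have hδ1 : δ ≤ 1 := min_le_left _ _
  have hδ2 : δ ≤ ε / (3 * N * B) := min_le_right _ _
  have hδε3 : δ * ((N:ℝ) * B) ≤ ε / 3 := by
    have h1 : δ * ((N:ℝ) * B) ≤ (ε / (3 * N * B)) * ((N:ℝ) * B) :=
      mul_le_mul_of_nonneg_right hδ2 (by positivity)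
    have h2 : (ε / (3 * N * B)) * ((N:ℝ) * B) = ε / 3 := by
      field_simp
    linarith
  have hNB1 : (1:ℝ) ≤ (N:ℝ) * B := by
    have := mul_le_mul hN1 hB1 (by norm_num) (by positivity)
    linarith
  have hδε3' : δ ≤ ε / 3 := by
    have h : ε / (3 * N * B) ≤ ε / 3 := by
      apply div_le_div_of_nonneg_left hε.le (by norm_num)
      have h33 : 3 * (N:ℝ) * B = 3 * ((N:ℝ) * B) := by ring
      linarith
    linarith
  set K' : ℕ := ⌈((K:ℝ) + N + 1) * B⌉₊ with hK'def
  set α : Fin r ⊕ Fin r × Fin m → ℝ :=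
    Sum.elim (fun i => 1 / ((N:ℝ) * Δ i)) (fun p => lam p.1 p.2 / Δ p.1) with hα
  obtain ⟨n, hnK', hn⟩ := simul_approx_large α hδpos K'
  have hnK'' : ((K:ℝ) + N + 1) * B ≤ n := by
    have h9 : (K':ℝ) ≤ (n:ℝ) := Nat.cast_le.mpr hnK'.le
    rw [hK'def] at h9
    exact le_trans (Nat.le_ceil _) h9
  set k : Fin r → ℕ := fun i => N * (round ((n:ℝ) * α (Sum.inl i))).toNat with hk
  have key : ∀ i, ((K:ℝ) < k i) ∧ |(k i:ℝ) * Δ i - n| < δ * ((N:ℝ) * Δ i) := by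
    intro i
    set A := (N:ℝ) * Δ i with hA
    have hApos : 0 < A := mul_pos hNpos (hΔ i)
    set a := round ((n:ℝ) * α (Sum.inl i)) with ha
    have e1 : |(n:ℝ) * α (Sum.inl i) - a| < δ := hn (Sum.inl i)
    have hαi : α (Sum.inl i) = 1 / A := by simp [hα, hA]
    rw [hαi] at e1
    have hrw : (n:ℝ) * (1 / A) - a = ((n:ℝ) - a * A) / A := by field_simp
    rw [hrw, abs_div, abs_of_pos hApos, div_lt_iff₀ hApos] at e1
    have hnΔ : ((K:ℝ) + N + 1) * Δ i ≤ n := by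
      have := mul_le_mul_of_nonneg_left (hΔB i) (by positivity : (0:ℝ) ≤ (K:ℝ) + N + 1)
      linarith
    have hKnn : (0:ℝ) ≤ (K:ℝ) := Nat.cast_nonneg K
    have hrg1 : ((K:ℝ) + N + 1) * Δ i - (N:ℝ) * Δ i = ((K:ℝ) + 1) * Δ i := by ring
    have hrg2 : (0:ℝ) ≤ ((K:ℝ) + 1) * Δ i :=
      mul_nonneg (by positivity) (hΔ i).le
    have hAn : A ≤ n := by rw [hA]; linarith
    have he1' : (n:ℝ) - a * A < δ * A := (abs_lt.mp e1).2
    have hδA : δ * A ≤ A := by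
      have := mul_nonneg (sub_nonneg.mpr hδ1) hApos.le
      have hexp : (1 - δ) * A = A - δ * A := by ring
      linarith
    have h0a : 0 ≤ a := by
      have haA : (0:ℝ) < (a:ℝ) * A := by
        have hsp : ((K:ℝ) + 1) * Δ i = (K:ℝ) * Δ i + Δ i := by ring
        have hnA : (K:ℝ) * Δ i + Δ i ≤ (n:ℝ) - A := by rw [hA]; linarith
        linarith [hΔ i, mul_nonneg hKnn (hΔ i).le]
      rcases mul_pos_iff.mp haA with ⟨h', -⟩ | ⟨-, h'⟩
      · exact_mod_cast h'.le
      · exact absurd hApos (not_lt.mpr h'.le)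
    have hkr : ((k i : ℕ) : ℝ) = (N:ℝ) * a := by
      have hkdef : k i = N * a.toNat := by simp only [hk]; rfl
      have htn : ((a.toNat : ℕ) : ℝ) = ((a : ℤ) : ℝ) := by
        rw [← Int.cast_natCast]
        exact congrArg _ (Int.toNat_of_nonneg h0a)
      rw [hkdef]
      push_cast
      rw [htn]
    have hkΔ : (k i : ℝ) * Δ i = (a:ℝ) * A := by rw [hkr, hA]; ring
    constructor
    · have h2 : ((K:ℝ)) * Δ i < (k i : ℝ) * Δ i := by
        rw [hkΔ]
        have hKK : ((K:ℝ) + 1) * Δ i - (K:ℝ) * Δ i = Δ i := by ring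
        have hnA2 : ((K:ℝ) + 1) * Δ i ≤ (n:ℝ) - A := by rw [hA]; linarith
        linarith [hΔ i]
      exact lt_of_mul_lt_mul_right h2 (hΔ i).le
    · rw [hkΔ, abs_sub_comm]
      exact e1
  refine ⟨k, (n:ℤ), fun i => ?_, fun i => ?_⟩
  · obtain ⟨hKk, -⟩ := key i
    have hk1 : K < k i := by exact_mod_cast hKk
    exact ⟨Nat.lt_of_le_of_lt (Nat.zero_le K) hk1, ⟨_, rfl⟩, hk1.le⟩
  · obtain ⟨-, hkΔd⟩ := key i
    have hδNΔ : δ * ((N:ℝ) * Δ i) ≤ ε / 3 := by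
      refine le_trans ?_ hδε3
      exact mul_le_mul_of_nonneg_left
        (mul_le_mul_of_nonneg_left (hΔB i) hNpos.le) hδpos.le
    refine ⟨fun q => ?_, ?_⟩
    · set t := lam i q with ht
      have e2 : nearestIntDist ((n:ℝ) * α (Sum.inr (i, q))) < δ := hn _
      have hαq : α (Sum.inr (i, q)) = t / Δ i := by simp [hα, ht]
      rw [hαq] at e2
      simp only [nearestIntDist] at e2 ⊢
      set c := round ((n:ℝ) * (t / Δ i)) with hc
      have step2 : |(k i:ℝ) * t - (c:ℝ)| ≤
          |(k i:ℝ) * t - (n:ℝ) * (t / Δ i)| + |(n:ℝ) * (t / Δ i) - (c:ℝ)| :=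
        abs_sub_le _ _ _
      have step1 : |(k i:ℝ) * t - (round ((k i:ℝ) * t) : ℤ)| ≤ |(k i:ℝ) * t - (c:ℝ)| :=
        nid_le ((k i:ℝ) * t) c
      have hΔne : Δ i ≠ 0 := (hΔ i).ne'
      have step3 : |(k i:ℝ) * t - (n:ℝ) * (t / Δ i)| ≤ δ * (N:ℝ) * |t| := by
        have hid : (k i:ℝ) * t - (n:ℝ) * (t / Δ i) = ((k i:ℝ) * Δ i - n) * (t / Δ i) := by
          field_simp
        rw [hid, abs_mul]
        have h5 : |t / Δ i| = |t| / Δ i := by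
          rw [abs_div, abs_of_pos (hΔ i)]
        rw [h5]
        have h6 : |(k i:ℝ) * Δ i - n| * (|t| / Δ i) ≤ (δ * ((N:ℝ) * Δ i)) * (|t| / Δ i) :=
          mul_le_mul_of_nonneg_right hkΔd.le (div_nonneg (abs_nonneg _) (hΔ i).le)
        have h7 : (δ * ((N:ℝ) * Δ i)) * (|t| / Δ i) = δ * (N:ℝ) * |t| := by
          field_simp
        linarith
      have step4 : δ * (N:ℝ) * |t| ≤ ε / 3 := by
        have h8 : δ * (N:ℝ) * |t| ≤ δ * (N:ℝ) * B :=
          mul_le_mul_of_nonneg_left (hlamB i q) (mul_nonneg hδpos.le hNpos.le)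
        calc δ * (N:ℝ) * |t| ≤ δ * (N:ℝ) * B := h8
          _ = δ * ((N:ℝ) * B) := by ring
          _ ≤ ε / 3 := hδε3
      have hδε3'' : |(n:ℝ) * (t / Δ i) - (c:ℝ)| < δ := e2
      calc |(k i:ℝ) * t - (round ((k i:ℝ) * t) : ℤ)| ≤ |(k i:ℝ) * t - (c:ℝ)| := step1
        _ ≤ |(k i:ℝ) * t - (n:ℝ) * (t / Δ i)| + |(n:ℝ) * (t / Δ i) - (c:ℝ)| := step2
        _ < δ * (N:ℝ) * |t| + δ := by linarith
        _ ≤ ε / 3 + ε / 3 := by linarith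
        _ < ε := by linarith
    · have hδNΔ' : δ * ((N:ℝ) * Δ i) ≤ ε / 3 := hδNΔ
      have hcast : (((n:ℤ)):ℝ) = (n:ℝ) := by push_cast; ring
      rw [hcast]
      calc |(k i:ℝ) * Δ i - (n:ℝ)| < δ * ((N:ℝ) * Δ i) := hkΔd
        _ ≤ ε / 3 := hδNΔ'
        _ < ε := by linarith
end

section
/- Let E be a finite-dimensional real inner product space, let k ∈ ℕ, let E = E₀ ⊇ E₁ ⊇ … ⊇ E_k be a decreasing chain of linear subspaces, and for each r with 0 ≤ r < k let ∂_r : E → E be a linear map such that: ∂_r(E_r) ⊆ E_r; ∂_r vanishes on the orthogonal complement of E_r; ∂_r ∘ ∂_r = 0; and E_{r+1} is the orthogonal complement of ∂_r(E_r) inside ker ∂_r ∩ E_r. Then the linear map D := ∂₀ + ∂₁ + … + ∂_{k−1} satisfies D ∘ D = 0, its range is the (internal, pairwise orthogonal) direct sum of the subspaces ∂_r(E_r) for 0 ≤ r < k, and its kernel is the orthogonal direct sum of the range of D and E_k. In particular, the quotient ker D / range D is isomorphic as a vector space to E_k. -/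
open scoped RealInnerProductSpace

/-- Reassembling a finite chain of differentials on a finite-dimensional real inner product
space into a single complex: given a decreasing chain `E = E₀ ⊇ E₁ ⊇ … ⊇ E_k` and maps
`∂ r` preserving `E r`, vanishing on `(E r)ᗮ`, squaring to zero, and with `E (r+1)` the
orthogonal complement of `∂ r (E r)` inside `ker (∂ r) ⊓ E r`, the map `D = ∑ ∂ r`
satisfies `D ∘ D = 0`, its range is the orthogonal direct sum of the `∂ r (E r)`, its
kernel is the orthogonal direct sum of its range and `E_k`, and `ker D / range D ≃ E_k`. -/
theorem spectral_sequence_single_complex {E : Type*} [NormedAddCommGroup E]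
    [InnerProductSpace ℝ E] [FiniteDimensional ℝ E] (k : ℕ)
    (Esub : Fin (k + 1) → Submodule ℝ E) (htop : Esub 0 = ⊤) (hchain : Antitone Esub)
    (del : Fin k → (E →ₗ[ℝ] E))
    (hmap : ∀ r : Fin k, Submodule.map (del r) (Esub r.castSucc) ≤ Esub r.castSucc)
    (hvanish : ∀ r : Fin k, ∀ x ∈ (Esub r.castSucc)ᗮ, del r x = 0)
    (hsq : ∀ r : Fin k, (del r) ∘ₗ (del r) = 0)
    (hnext : ∀ r : Fin k, Esub r.succ =
      (LinearMap.ker (del r) ⊓ Esub r.castSucc) ⊓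
        (Submodule.map (del r) (Esub r.castSucc))ᗮ) :
    ∀ D : E →ₗ[ℝ] E, D = ∑ r : Fin k, del r →
    (D ∘ₗ D = 0) ∧
    (LinearMap.range D = ⨆ r : Fin k, Submodule.map (del r) (Esub r.castSucc)) ∧
    (∀ r s : Fin k, r ≠ s → ∀ x ∈ Submodule.map (del r) (Esub r.castSucc),
      ∀ y ∈ Submodule.map (del s) (Esub s.castSucc), ⟪x, y⟫ = 0) ∧
    (LinearMap.ker D = LinearMap.range D ⊔ Esub (Fin.last k)) ∧
    (∀ x ∈ LinearMap.range D, ∀ y ∈ Esub (Fin.last k), ⟪x, y⟫ = 0) ∧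
    Nonempty ((↥(LinearMap.ker D) ⧸
        Submodule.comap (LinearMap.ker D).subtype (LinearMap.range D)) ≃ₗ[ℝ]
      ↥(Esub (Fin.last k))) := by
  intro D hD
  -- Basic consequences of the hypotheses
  set B : Fin k → Submodule ℝ E := fun r => LinearMap.range (del r) with hBdef
  have hmap_eq : ∀ r : Fin k, Submodule.map (del r) (Esub r.castSucc) = B r := by
    intro r
    refine le_antisymm LinearMap.map_le_range ?_
    rintro y ⟨x, rfl⟩
    obtain ⟨p, hp, q, hq, rfl⟩ := (Esub r.castSucc).exists_add_mem_mem_orthogonal x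
    rw [map_add, hvanish r q hq, add_zero]
    exact ⟨p, hp, rfl⟩
  have hswap : ∀ p q : Submodule ℝ E, p ≤ qᗮ → q ≤ pᗮ := by
    intro p q h y hy
    rw [Submodule.mem_orthogonal]
    intro u hu
    have := (Submodule.mem_orthogonal q (u)).1 (h hu) y hy
    rw [real_inner_comm] at this
    exact this
  have hB_le : ∀ r : Fin k, B r ≤ Esub r.castSucc := by
    intro r; rw [← hmap_eq]; exact hmap r
  have hB_ker : ∀ r : Fin k, B r ≤ LinearMap.ker (del r) := by
    rintro r y ⟨x, rfl⟩
    have := congrFun (congrArg DFunLike.coe (hsq r)) x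
    simpa using this
  have hsucc_le_ker : ∀ r : Fin k, Esub r.succ ≤ LinearMap.ker (del r) := by
    intro r; rw [hnext r]; exact le_trans inf_le_left inf_le_left
  have hsucc_le_E : ∀ r : Fin k, Esub r.succ ≤ Esub r.castSucc := by
    intro r; rw [hnext r]; exact le_trans inf_le_left inf_le_right
  have hsucc_perp : ∀ r : Fin k, Esub r.succ ≤ (B r)ᗮ := by
    intro r; rw [hnext r, hmap_eq r]; exact inf_le_right
  have hle_of_lt : ∀ r s : Fin k, r < s → Esub s.castSucc ≤ Esub r.succ := by
    intro r s hrs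
    have h1 : r.succ ≤ s.castSucc := by
      rw [Fin.le_def, Fin.val_succ, Fin.coe_castSucc]
      exact hrs
    exact hchain h1
  have hEperp_ker : ∀ r : Fin k, (Esub r.castSucc)ᗮ ≤ LinearMap.ker (del r) := by
    intro r x hx
    exact LinearMap.mem_ker.2 (hvanish r x hx)
  -- composite of any two differentials vanishes
  have hcomp : ∀ r s : Fin k, ∀ x : E, del r (del s x) = 0 := by
    intro r s x
    rcases lt_trichotomy r s with h | h | h
    · have h1 : del s x ∈ Esub r.succ := hle_of_lt r s h (hB_le s ⟨x, rfl⟩)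
      exact hsucc_le_ker r h1
    · subst h
      have := congrFun (congrArg DFunLike.coe (hsq r)) x
      simpa using this
    · -- s < r : del s x ∈ B s ≤ (Esub r.castSucc)ᗮ
      have h1 : Esub r.castSucc ≤ (B s)ᗮ :=
        le_trans (hle_of_lt s r h) (hsucc_perp s)
      have h2 : B s ≤ (Esub r.castSucc)ᗮ := hswap _ _ h1
      exact hvanish r _ (h2 ⟨x, rfl⟩)
  have hDapp : ∀ x : E, D x = ∑ r : Fin k, del r x := by
    intro x; rw [hD]; exact LinearMap.sum_apply _ _ x
  -- D ∘ D = 0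
  have hDsq : D ∘ₗ D = 0 := by
    ext x
    simp only [LinearMap.comp_apply, LinearMap.zero_apply, hDapp, map_sum,
      LinearMap.sum_apply]
    exact Finset.sum_eq_zero fun r _ => Finset.sum_eq_zero fun s _ => hcomp r s x
  -- pairwise orthogonality of the B r
  have hBperp : ∀ r s : Fin k, r < s → B s ≤ (B r)ᗮ := by
    intro r s h
    exact le_trans (hB_le s) (le_trans (hle_of_lt r s h) (hsucc_perp r))
  have horthB : ∀ r s : Fin k, r ≠ s → ∀ x ∈ B r, ∀ y ∈ B s, ⟪x, y⟫ = 0 := by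
    intro r s hne x hx y hy
    rcases lt_or_gt_of_ne hne with h | h
    · exact (Submodule.mem_orthogonal (B r) y).1 (hBperp r s h hy) x hx
    · rw [real_inner_comm]
      exact (Submodule.mem_orthogonal (B s) x).1 (hBperp s r h hx) y hy
  -- D x = 0 iff all del r x = 0
  have hker_iff : ∀ x : E, D x = 0 ↔ ∀ r : Fin k, del r x = 0 := by
    intro x
    constructor
    · intro h r
      have h1 : ⟪del r x, D x⟫ = ‖del r x‖ ^ 2 := by
        rw [hDapp, inner_sum]
        rw [Finset.sum_eq_single r]
        · rw [real_inner_self_eq_norm_sq]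
        · intro s _ hs
          exact horthB r s (Ne.symm hs) _ ⟨x, rfl⟩ _ ⟨x, rfl⟩
        · intro hr; exact absurd (Finset.mem_univ r) hr
      rw [h, inner_zero_right] at h1
      have := h1.symm
      rw [pow_eq_zero_iff (by norm_num : 2 ≠ 0)] at this
      exact norm_eq_zero.1 this
    · intro h
      rw [hDapp]
      exact Finset.sum_eq_zero fun r _ => h r
  -- range of D
  have hrangeD : LinearMap.range D = ⨆ r : Fin k, B r := by
    apply le_antisymm
    · rintro y ⟨x, rfl⟩
      rw [hDapp]
      exact Submodule.sum_mem _ fun r _ =>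
        Submodule.mem_iSup_of_mem r ⟨x, rfl⟩
    · refine iSup_le fun r => ?_
      rintro y ⟨x, rfl⟩
      obtain ⟨a, ha, b, hb, rfl⟩ :=
        (LinearMap.ker (del r)).exists_add_mem_mem_orthogonal x
      have hbE : b ∈ Esub r.castSucc := by
        have h1 : (LinearMap.ker (del r))ᗮ ≤ Esub r.castSucc := by
          have := Submodule.orthogonal_le (hEperp_ker r)
          rwa [Submodule.orthogonal_orthogonal] at this
        exact h1 hb
      refine ⟨b, ?_⟩
      rw [hDapp]
      rw [Finset.sum_eq_single r]
      · rw [map_add, LinearMap.mem_ker.1 ha, zero_add]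
      · intro s _ hs
        rcases lt_trichotomy s r with h | h | h
        · exact hsucc_le_ker s (hle_of_lt s r h hbE)
        · exact absurd h hs
        · -- r < s : b ∈ (ker del r)ᗮ ≤ (Esub s.castSucc)ᗮ
          have h1 : Esub s.castSucc ≤ LinearMap.ker (del r) :=
            le_trans (hle_of_lt r s h) (hsucc_le_ker r)
          have h2 : (LinearMap.ker (del r))ᗮ ≤ (Esub s.castSucc)ᗮ :=
            Submodule.orthogonal_le h1
          exact hvanish s b (h2 hb)
      · intro hr; exact absurd (Finset.mem_univ r) hr
  -- del r vanishes on ⨆ B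
  have hsupB_ker : ∀ r : Fin k, (⨆ s : Fin k, B s) ≤ LinearMap.ker (del r) := by
    intro r
    refine iSup_le fun s => ?_
    rintro y ⟨x, rfl⟩
    exact LinearMap.mem_ker.2 (hcomp r s x)
  -- E_k ≤ ker del r for every r
  have hlast_le : ∀ r : Fin k, Esub (Fin.last k) ≤ Esub r.succ := by
    intro r
    have h1 : r.succ ≤ Fin.last k := by
      rw [Fin.le_def, Fin.val_succ, Fin.val_last]
      exact r.isLt
    exact hchain h1
  have hlast_ker : ∀ r : Fin k, Esub (Fin.last k) ≤ LinearMap.ker (del r) := by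
    intro r; exact le_trans (hlast_le r) (hsucc_le_ker r)
  -- kernel of D
  have hkerD : LinearMap.ker D = LinearMap.range D ⊔ Esub (Fin.last k) := by
    apply le_antisymm
    · intro x hx
      have hx' : ∀ r : Fin k, del r x = 0 := (hker_iff x).1 (LinearMap.mem_ker.1 hx)
      rw [hrangeD]
      have key : ∀ j : ℕ, ∀ hj : j ≤ k,
          x ∈ (⨆ s : Fin k, B s) ⊔ Esub ⟨j, Nat.lt_succ_of_le hj⟩ := by
        intro j
        induction j with
        | zero =>
          intro hj
          have : Esub ⟨0, Nat.lt_succ_of_le hj⟩ = ⊤ := by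
            have : (⟨0, Nat.lt_succ_of_le hj⟩ : Fin (k+1)) = 0 := rfl
            rw [this, htop]
          rw [this]
          simp
        | succ j ih =>
          intro hj
          have hjk : j < k := hj
          set r : Fin k := ⟨j, hjk⟩ with hr
          obtain ⟨u, hu, v, hv, rfl⟩ :=
            Submodule.mem_sup.1 (ih (Nat.le_of_succ_le hj))
          have hvE : v ∈ Esub r.castSucc := hv
          have hdelv : del r v = 0 := by
            have h1 : del r (u + v) = 0 := hx' r
            have h2 : del r u = 0 := hsupB_ker r hu
            rw [map_add, h2, zero_add] at h1
            exact h1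
          obtain ⟨y, hy, z, hz, hvyz⟩ := (B r).exists_add_mem_mem_orthogonal v
          have hzker : z ∈ LinearMap.ker (del r) ⊓ Esub r.castSucc := by
            refine Submodule.mem_inf.mpr ⟨?_, ?_⟩
            · have : del r z = del r v - del r y := by
                rw [hvyz, map_add]; abel
              rw [LinearMap.mem_ker, this, hdelv, LinearMap.mem_ker.1 (hB_ker r hy),
                sub_zero]
            · have : z = v - y := by rw [hvyz]; abel
              rw [this]
              exact Submodule.sub_mem _ hvE (hB_le r hy)
          have hzsucc : z ∈ Esub r.succ := by
            rw [hnext r, hmap_eq r]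
            exact ⟨hzker, hz⟩
          have : u + v = (u + y) + z := by rw [hvyz]; abel
          rw [this]
          refine Submodule.add_mem_sup ?_ ?_
          · exact Submodule.add_mem _ hu (Submodule.mem_iSup_of_mem r hy)
          · exact hzsucc
      have := key k le_rfl
      convert this using 3
      rfl
    · refine sup_le ?_ ?_
      · rintro y ⟨x, rfl⟩
        rw [LinearMap.mem_ker]
        have := congrFun (congrArg DFunLike.coe hDsq) x
        simpa using this
      · intro x hx
        rw [LinearMap.mem_ker, hDapp]
        exact Finset.sum_eq_zero fun r _ => LinearMap.mem_ker.1 (hlast_ker r hx)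
  -- orthogonality of range D and E_k
  have hrange_perp : LinearMap.range D ≤ (Esub (Fin.last k))ᗮ := by
    rw [hrangeD]
    refine iSup_le fun r => hswap _ _ ?_
    exact le_trans (hlast_le r) (hsucc_perp r)
  have horth_last : ∀ x ∈ LinearMap.range D, ∀ y ∈ Esub (Fin.last k), ⟪x, y⟫ = 0 := by
    intro x hx y hy
    rw [real_inner_comm]
    exact (Submodule.mem_orthogonal _ x).1 (hrange_perp hx) y hy
  refine ⟨hDsq, by rw [hrangeD]; exact iSup_congr fun r => (hmap_eq r).symm ▸ rfl,
    ?_, hkerD, horth_last, ?_⟩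
  · intro r s hne x hx y hy
    rw [hmap_eq r] at hx; rw [hmap_eq s] at hy
    exact horthB r s hne x hx y hy
  · -- the quotient equivalence
    have hrange_le_ker : LinearMap.range D ≤ LinearMap.ker D := by
      rw [hkerD]; exact le_sup_left
    have hlast_le_ker : Esub (Fin.last k) ≤ LinearMap.ker D := by
      rw [hkerD]; exact le_sup_right
    set R' := Submodule.comap (LinearMap.ker D).subtype (LinearMap.range D) with hR'
    set H' := Submodule.comap (LinearMap.ker D).subtype (Esub (Fin.last k)) with hH'
    have hcompl : IsCompl R' H' := by
      constructor
      · rw [disjoint_iff, Submodule.eq_bot_iff]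
        rintro ⟨x, hx⟩ ⟨hx1, hx2⟩
        have : ⟪x, x⟫ = 0 := horth_last x hx1 x hx2
        have hx0 : x = 0 := by
          rwa [inner_self_eq_zero] at this
        exact Subtype.ext hx0
      · rw [codisjoint_iff, Submodule.eq_top_iff']
        rintro ⟨x, hx⟩
        have hx' : x ∈ LinearMap.range D ⊔ Esub (Fin.last k) := by rwa [← hkerD]
        obtain ⟨u, hu, v, hv, hxuv⟩ := Submodule.mem_sup.1 hx'
        refine Submodule.mem_sup.2 ⟨⟨u, hrange_le_ker hu⟩, hu, ⟨v, hlast_le_ker hv⟩, hv, ?_⟩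
        exact Subtype.ext hxuv
    exact ⟨(Submodule.quotientEquivOfIsCompl R' H' hcompl).trans
      (Submodule.comapSubtypeEquivOfLe hlast_le_ker)⟩
end

section
/- Let S be a finite set, let A : S → ℝ and μ̂ : S → ℝ be functions with A(x) > 0 for every x ∈ S, and let n ≥ 2 be an integer. Suppose that for each j ∈ ℕ we are given an element x_j ∈ S and a positive integer k_j, and set d_j := n + 1 + 2j; assume: (monotonicity) k_j·A(x_j) ≤ k_{j+1}·A(x_{j+1}) for all j, and (index localization) |k_j·μ̂(x_j) − d_j| ≤ n − 1 for all j. Call an element x ∈ S reoccurring if x_j = x for infinitely many j. Then every reoccurring x satisfies μ̂(x) > 0, and any two reoccurring elements x and y satisfy A(x)·μ̂(y) = A(y)·μ̂(x), i.e. the ratios A(x)/μ̂(x) and A(y)/μ̂(y) coincide. -/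
/-- Combinatorial core of the resonance relations: if a sequence of carried orbits
`x j` with iterations `k j` has non-decreasing total actions `k j · A (x j)` and mean
indices `k j · μ (x j)` within `n − 1` of `d j = n + 1 + 2 j`, then every reoccurring
element `y` has `μ y > 0`, and any two reoccurring elements `y, z` satisfy
`A y · μ z = A z · μ y`, i.e. `A y / μ y = A z / μ z`. -/
theorem resonance_relations {S : Type*} [Fintype S] (A μ : S → ℝ)
    (hA : ∀ x : S, 0 < A x) (n : ℕ) (hn : 2 ≤ n)
    (x : ℕ → S) (k : ℕ → ℕ) (hk : ∀ j, 0 < k j)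
    (hmono : ∀ j, (k j : ℝ) * A (x j) ≤ (k (j + 1) : ℝ) * A (x (j + 1)))
    (hidx : ∀ j, |(k j : ℝ) * μ (x j) - ((n : ℝ) + 1 + 2 * (j : ℝ))| ≤ (n : ℝ) - 1) :
    (∀ y : S, {j : ℕ | x j = y}.Infinite → 0 < μ y) ∧
    (∀ y z : S, {j : ℕ | x j = y}.Infinite → {j : ℕ | x j = z}.Infinite →
      A y * μ z = A z * μ y) := by
  have hn' : (2 : ℝ) ≤ (n : ℝ) := by exact_mod_cast hn
  have hlow : ∀ j : ℕ, (2 * (j : ℝ) + 2) ≤ (k j : ℝ) * μ (x j) := by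
    intro j
    have h := (abs_le.mp (hidx j)).1
    linarith
  have hhigh : ∀ j, (k j : ℝ) * μ (x j) ≤ 2 * (j : ℝ) + 2 * n := by
    intro j
    have h := (abs_le.mp (hidx j)).2
    linarith
  have hμpos : ∀ y : S, {j : ℕ | x j = y}.Infinite → 0 < μ y := by
    intro y hy
    obtain ⟨j, hj⟩ := hy.nonempty
    simp only [Set.mem_setOf_eq] at hj
    have h1 := hlow j
    rw [hj] at h1
    have hkpos : (0 : ℝ) < (k j : ℝ) := by exact_mod_cast hk j
    have hj0 : (0 : ℝ) ≤ (j : ℝ) := Nat.cast_nonneg j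
    nlinarith
  refine ⟨hμpos, ?_⟩
  intro y z hy hz
  -- the function recording the candidate ratio
  set g : ℕ → ℝ := fun j => A (x j) / μ (x j) with hgdef
  -- all elements carried at large enough indices are reoccurring
  have hbad : {j : ℕ | ¬ ({i : ℕ | x i = x j}).Infinite}.Finite := by
    have hsub : {j : ℕ | ¬ ({i : ℕ | x i = x j}).Infinite} ⊆
        ⋃ w ∈ {w : S | ¬ ({i : ℕ | x i = w}).Infinite}, {i : ℕ | x i = w} := by
      intro j hj
      exact Set.mem_biUnion hj rfl
    exact ((Set.toFinite _).biUnion (fun w hw => Set.not_infinite.mp hw)).subset hsub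
  obtain ⟨J0, hJ0⟩ := hbad.bddAbove
  have hgood : ∀ j, J0 + 1 ≤ j → ({i : ℕ | x i = x j}).Infinite := by
    intro j hj
    by_contra h
    have := hJ0 h
    omega
  have hμt : ∀ j, J0 + 1 ≤ j → 0 < μ (x j) := fun j hj => hμpos _ (hgood j hj)
  have hgpos : ∀ j, J0 + 1 ≤ j → 0 < g j := fun j hj => div_pos (hA _) (hμt j hj)
  have hAg : ∀ j, J0 + 1 ≤ j → A (x j) = μ (x j) * g j := by
    intro j hj
    have h := (hμt j hj).ne'
    simp only [hgdef]
    field_simp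
  have ha_low : ∀ j, J0 + 1 ≤ j → (2 * (j : ℝ) + 2) * g j ≤ (k j : ℝ) * A (x j) := by
    intro j hj
    rw [hAg j hj, ← mul_assoc]
    exact mul_le_mul_of_nonneg_right (hlow j) (hgpos j hj).le
  have ha_high : ∀ j, J0 + 1 ≤ j → (k j : ℝ) * A (x j) ≤ (2 * (j : ℝ) + 2 * n) * g j := by
    intro j hj
    rw [hAg j hj, ← mul_assoc]
    exact mul_le_mul_of_nonneg_right (hhigh j) (hgpos j hj).le
  have hstep : ∀ j, J0 + 1 ≤ j →
      (2 * (j : ℝ) + 2) * g j ≤ (2 * (j : ℝ) + 2 + 2 * n) * g (j + 1) := by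
    intro j hj
    have h1 := ha_low j hj
    have h2 := hmono j
    have h3 := ha_high (j + 1) (by omega)
    push_cast at h3
    linarith
  -- a uniform gap between distinct values of g
  have hgmem : ∀ j, g j ∈ Finset.image (fun w : S => A w / μ w) Finset.univ := by
    intro j
    exact Finset.mem_image.mpr ⟨x j, Finset.mem_univ _, rfl⟩
  set F : Finset ℝ := Finset.image (fun w : S => A w / μ w) Finset.univ with hF
  obtain ⟨δ, hδpos, hδ⟩ : ∃ δ > (0 : ℝ), ∀ i j : ℕ, g i < g j → g i + δ ≤ g j := by
    by_cases hP : ((F ×ˢ F).filter fun p => p.1 < p.2).Nonempty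
    · refine ⟨((F ×ˢ F).filter fun p => p.1 < p.2).inf' hP (fun p => p.2 - p.1), ?_, ?_⟩
      · refine (Finset.lt_inf'_iff hP).mpr fun p hp => ?_
        have := (Finset.mem_filter.mp hp).2
        linarith
      · intro i j hij
        have hmem : (g i, g j) ∈ (F ×ˢ F).filter fun p => p.1 < p.2 :=
          Finset.mem_filter.mpr ⟨Finset.mem_product.mpr ⟨hgmem i, hgmem j⟩, hij⟩
        have := Finset.inf'_le (fun p : ℝ × ℝ => p.2 - p.1) hmem
        linarith
    · refine ⟨1, one_pos, ?_⟩
      intro i j hij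
      have hmem : (g i, g j) ∈ (F ×ˢ F).filter fun p : ℝ × ℝ => p.1 < p.2 :=
        Finset.mem_filter.mpr ⟨Finset.mem_product.mpr ⟨hgmem i, hgmem j⟩, hij⟩
      exact absurd ⟨_, hmem⟩ hP
  have hFne : F.Nonempty := ⟨g 0, hgmem 0⟩
  set M : ℝ := F.max' hFne with hM
  have hMle : ∀ j, g j ≤ M := fun j => F.le_max' _ (hgmem j)
  obtain ⟨N, hN⟩ := exists_nat_gt ((n : ℝ) * M / δ)
  have hNδ : (n : ℝ) * M < N * δ := by
    rw [div_lt_iff₀ hδpos] at hN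
    linarith
  -- on the tail, g is nondecreasing
  have hmono2 : ∀ j, max (J0 + 1) N ≤ j → g j ≤ g (j + 1) := by
    intro j hj
    have hjJ : J0 + 1 ≤ j := le_trans (le_max_left _ _) hj
    have hjN : N ≤ j := le_trans (le_max_right _ _) hj
    by_contra h
    push_neg at h
    have hgap := hδ _ _ h
    have hst := hstep j hjJ
    have hMg : g (j + 1) ≤ M := hMle (j + 1)
    have hjN' : (N : ℝ) ≤ (j : ℝ) := by exact_mod_cast hjN
    have hj0 : (0 : ℝ) ≤ (j : ℝ) := Nat.cast_nonneg j
    -- (2j+2)*(g j - g (j+1)) ≤ 2n * g (j+1) ≤ 2nM < 2Nδ ≤ δ(2j+2) ≤ (2j+2)(g j - g(j+1))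
    have e1 : (2 * (j : ℝ) + 2) * (g j - g (j + 1)) ≤ 2 * n * g (j + 1) := by nlinarith
    have e2 : 2 * (n : ℝ) * g (j + 1) ≤ 2 * n * M := by
      have : (0 : ℝ) ≤ 2 * n := by positivity
      nlinarith
    have e3 : δ * (2 * (j : ℝ) + 2) ≤ (2 * (j : ℝ) + 2) * (g j - g (j + 1)) := by nlinarith
    nlinarith
  have hmono3 : ∀ i j, max (J0 + 1) N ≤ i → i ≤ j → g i ≤ g j := by
    intro i j hi hij
    induction j, hij using Nat.le_induction with
    | base => exact le_refl _
    | succ m hm ih => exact le_trans ih (hmono2 m (le_trans hi hm))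
  -- pick interleaved occurrences of y and z
  obtain ⟨j1, hj1mem, hj1⟩ := hy.exists_gt (max (J0 + 1) N)
  obtain ⟨j2, hj2mem, hj2⟩ := hz.exists_gt j1
  obtain ⟨j3, hj3mem, hj3⟩ := hy.exists_gt j2
  simp only [Set.mem_setOf_eq] at hj1mem hj2mem hj3mem
  have h12 : g j1 ≤ g j2 := hmono3 j1 j2 hj1.le hj2.le
  have h23 : g j2 ≤ g j3 := hmono3 j2 j3 (le_trans hj1.le hj2.le) hj3.le
  have hg1 : g j1 = A y / μ y := by rw [hgdef]; simp [hj1mem]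
  have hg2 : g j2 = A z / μ z := by rw [hgdef]; simp [hj2mem]
  have hg3 : g j3 = A y / μ y := by rw [hgdef]; simp [hj3mem]
  have heq : A y / μ y = A z / μ z := by
    rw [hg1, hg2] at h12
    rw [hg2, hg3] at h23
    linarith
  exact (div_eq_div_iff (hμpos y hy).ne' (hμpos z hz).ne').mp heq
end
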